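/- Let p > 1 and λ = λ₀(p) = (2/π)·arccos((p−1)/(p+1)). Define W : [0, π/2] → ℝ by W(θ) = (cot(λπ/4) + tan(λπ/2))·sin λθ for 0 ≤ θ ≤ π/4 and W(θ) = cos λθ + tan(λπ/2)·sin λθ for π/4 ≤ θ ≤ π/2. Then: (i) the two formulas agree at θ = π/4, so W is well defined and continuous; (ii) W is not identically zero; (iii) W(0) = 0; (iv) the derivative of θ ↦ cos λθ + tan(λπ/2) sin λθ vanishes at θ = π/2; (v) each of the two defining functions satisfies the ODE W'' = −λ²W; and (vi) the left derivative of W at π/4 equals p times the right derivative of W at π/4. Hence W is a nontrivial eigenfunction of the Sturm–Liouville interface problem for the eigenvalue λ₀(p). -/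

import Mathlib

open Real

set_option maxHeartbeats 1000000 in
/-- For p > 1 and λ = λ₀(p) = (2/π)·arccos((p−1)/(p+1)), the piecewise function
W(θ) = (cot(λπ/4)+tan(λπ/2))·sin λθ on [0,π/4], W(θ) = cos λθ + tan(λπ/2)·sin λθ on
[π/4,π/2] is a nontrivial eigenfunction of the Sturm–Liouville interface problem:
(i) the two branches agree at θ = π/4, (ii) W is not identically zero, (iii) W(0) = 0,
(iv) the second branch has vanishing derivative at π/2, (v) both branches satisfy
W'' = −λ²W, and (vi) the left derivative of W at π/4 equals p times its right derivative. -/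
theorem eigenfunction_properties (p : ℝ) (hp : 1 < p) (lam : ℝ)
    (hlam : lam = (2 / π) * Real.arccos ((p - 1) / (p + 1)))
    (f₁ f₂ W : ℝ → ℝ)
    (hf₁ : f₁ = fun θ => (Real.cot (lam * π / 4) + Real.tan (lam * π / 2)) *
      Real.sin (lam * θ))
    (hf₂ : f₂ = fun θ => Real.cos (lam * θ) + Real.tan (lam * π / 2) * Real.sin (lam * θ))
    (hW : W = fun θ => if θ ≤ π / 4 then f₁ θ else f₂ θ) :
    f₁ (π / 4) = f₂ (π / 4) ∧
    (∃ θ ∈ Set.Icc (0 : ℝ) (π / 2), W θ ≠ 0) ∧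
    W 0 = 0 ∧
    deriv f₂ (π / 2) = 0 ∧
    (∀ θ : ℝ, deriv (deriv f₁) θ = -lam ^ 2 * f₁ θ ∧ deriv (deriv f₂) θ = -lam ^ 2 * f₂ θ) ∧
    derivWithin W (Set.Iic (π / 4)) (π / 4) = p * derivWithin W (Set.Ici (π / 4)) (π / 4) := by
  have hπ := Real.pi_pos
  have hp1 : (0:ℝ) < p + 1 := by linarith
  obtain ⟨q, hqdef⟩ : ∃ q : ℝ, q = (p - 1) / (p + 1) := ⟨_, rfl⟩
  have hq0 : 0 < q := hqdef ▸ div_pos (by linarith) hp1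
  have hq1 : q < 1 := hqdef ▸ (div_lt_one hp1).2 (by linarith)
  obtain ⟨b, hbdef⟩ : ∃ b : ℝ, b = Real.arccos q := ⟨_, rfl⟩
  have hb0 : 0 < b := hbdef ▸ Real.arccos_pos.2 hq1
  have hbpi : b ≤ π := hbdef ▸ Real.arccos_le_pi q
  have hcosb : Real.cos b = q := by
    rw [hbdef]; exact Real.cos_arccos (by linarith) hq1.le
  have hb2 : b < π / 2 := by
    by_contra h
    push_neg at h
    have := Real.cos_nonpos_of_pi_div_two_le_of_le h (by linarith)
    rw [hcosb] at this
    linarith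
  have hlb : lam * π / 2 = b := by
    rw [hlam, hbdef, hqdef]
    field_simp
  obtain ⟨a, hadef⟩ : ∃ a : ℝ, a = lam * π / 4 := ⟨_, rfl⟩
  have hla : a = b / 2 := by rw [hadef]; linarith [hlb]
  have hba : b = 2 * a := by linarith
  have ha0 : 0 < a := by linarith
  have ha2 : a < π / 2 := by linarith
  have hsina : 0 < Real.sin a := Real.sin_pos_of_pos_of_lt_pi ha0 (by linarith)
  have hcosa : 0 < Real.cos a := Real.cos_pos_of_mem_Ioo ⟨by linarith, ha2⟩
  have hcosbne : Real.cos b ≠ 0 := by rw [hcosb]; exact hq0.ne'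
  have hcos2 : Real.cos b = 2 * Real.cos a ^ 2 - 1 := by rw [hba, Real.cos_two_mul]
  have hsinb : Real.sin b = 2 * Real.sin a * Real.cos a := by rw [hba, Real.sin_two_mul]
  have hpyth := Real.sin_sq_add_cos_sq a
  have hkey : Real.cos a ^ 2 = p * Real.sin a ^ 2 := by
    have h2 : 2 * Real.cos a ^ 2 - 1 = (p - 1) / (p + 1) := by rw [← hcos2, hcosb]; exact hqdef
    have h3 : (2 * Real.cos a ^ 2 - 1) * (p + 1) = p - 1 := by
      rw [h2]; field_simp
    have hs : Real.sin a ^ 2 = 1 - Real.cos a ^ 2 := by linarith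
    rw [hs]
    linear_combination h3 / 2
  have hi : f₁ (π / 4) = f₂ (π / 4) := by
    rw [hf₁, hf₂]
    simp only
    have harg : lam * (π / 4) = a := by rw [hadef]; ring
    rw [harg, ← hadef, Real.cot_eq_cos_div_sin]
    field_simp
  refine ⟨hi, ?_, ?_, ?_, ?_, ?_⟩
  · refine ⟨π / 2, ⟨by positivity, le_refl _⟩, ?_⟩
    have hnot : ¬ (π / 2 ≤ π / 4) := by linarith
    rw [hW]
    simp only [hnot, if_false]
    rw [hf₂]
    simp only
    have harg : lam * (π / 2) = b := by rw [← hlb]; ring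
    rw [harg, hlb, Real.tan_eq_sin_div_cos]
    have hval : Real.cos b + Real.sin b / Real.cos b * Real.sin b = 1 / Real.cos b := by
      field_simp
      linear_combination Real.sin_sq_add_cos_sq b
    rw [hval]
    exact one_div_ne_zero hcosbne
  · simp only [hW]
    rw [if_pos (by linarith : (0:ℝ) ≤ π / 4), hf₁]
    simp
  · have hsinD : ∀ x : ℝ, HasDerivAt (fun θ => Real.sin (lam * θ)) (Real.cos (lam * x) * lam) x :=
      fun x => (Real.hasDerivAt_sin (lam * x)).comp x (by simpa using (hasDerivAt_id x).const_mul lam)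
    have hcosD : ∀ x : ℝ, HasDerivAt (fun θ => Real.cos (lam * θ)) (-Real.sin (lam * x) * lam) x :=
      fun x => (Real.hasDerivAt_cos (lam * x)).comp x (by simpa using (hasDerivAt_id x).const_mul lam)
    have hD2 : HasDerivAt f₂
        (-Real.sin (lam * (π / 2)) * lam + Real.tan (lam * π / 2) * (Real.cos (lam * (π / 2)) * lam))
        (π / 2) := by
      rw [hf₂]
      exact (hcosD _).add ((hsinD _).const_mul _)
    rw [hD2.deriv]
    have harg : lam * (π / 2) = b := by rw [← hlb]; ring
    rw [harg, hlb, Real.tan_eq_sin_div_cos]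
    field_simp
    ring
  · intro x
    have hsinD : ∀ x : ℝ, HasDerivAt (fun θ => Real.sin (lam * θ)) (Real.cos (lam * x) * lam) x :=
      fun x => (Real.hasDerivAt_sin (lam * x)).comp x (by simpa using (hasDerivAt_id x).const_mul lam)
    have hcosD : ∀ x : ℝ, HasDerivAt (fun θ => Real.cos (lam * θ)) (-Real.sin (lam * x) * lam) x :=
      fun x => (Real.hasDerivAt_cos (lam * x)).comp x (by simpa using (hasDerivAt_id x).const_mul lam)
    set C : ℝ := Real.cot (lam * π / 4) + Real.tan (lam * π / 2) with hC
    set T : ℝ := Real.tan (lam * π / 2) with hT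
    have hd1 : deriv f₁ = fun y => C * (Real.cos (lam * y) * lam) := by
      funext y
      rw [hf₁]
      exact ((hsinD y).const_mul C).deriv
    have hd2 : deriv f₂ = fun y => -Real.sin (lam * y) * lam + T * (Real.cos (lam * y) * lam) := by
      funext y
      rw [hf₂]
      exact ((hcosD y).add ((hsinD y).const_mul T)).deriv
    constructor
    · rw [hd1]
      have h := (((hcosD x).mul_const lam).const_mul C).deriv
      rw [h, hf₁]
      simp only
      ring
    · rw [hd2]
      have h1 : HasDerivAt (fun y => -Real.sin (lam * y) * lam)
          (-(Real.cos (lam * x) * lam) * lam) x := by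
        simpa [neg_mul] using ((hsinD x).neg.mul_const lam)
      have h2 : HasDerivAt (fun y => T * (Real.cos (lam * y) * lam))
          (T * (-Real.sin (lam * x) * lam * lam)) x :=
        (((hcosD x).mul_const lam).const_mul T)
      rw [(h1.fun_add h2).deriv, hf₂]
      simp only
      ring
  · have hsinD : ∀ x : ℝ, HasDerivAt (fun θ => Real.sin (lam * θ)) (Real.cos (lam * x) * lam) x :=
      fun x => (Real.hasDerivAt_sin (lam * x)).comp x (by simpa using (hasDerivAt_id x).const_mul lam)
    have hcosD : ∀ x : ℝ, HasDerivAt (fun θ => Real.cos (lam * θ)) (-Real.sin (lam * x) * lam) x :=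
      fun x => (Real.hasDerivAt_cos (lam * x)).comp x (by simpa using (hasDerivAt_id x).const_mul lam)
    set C : ℝ := Real.cot (lam * π / 4) + Real.tan (lam * π / 2) with hC
    set T : ℝ := Real.tan (lam * π / 2) with hT
    have hD1 : HasDerivAt f₁ (C * (Real.cos (lam * (π / 4)) * lam)) (π / 4) := by
      rw [hf₁]; exact (hsinD _).const_mul C
    have hD2 : HasDerivAt f₂
        (-Real.sin (lam * (π / 4)) * lam + T * (Real.cos (lam * (π / 4)) * lam)) (π / 4) := by
      rw [hf₂]; exact (hcosD _).add ((hsinD _).const_mul T)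
    have hWL : Set.EqOn W f₁ (Set.Iic (π / 4)) := by
      intro θ hθ
      simp only [hW]
      rw [if_pos (Set.mem_Iic.1 hθ)]
    have hWR : Set.EqOn W f₂ (Set.Ici (π / 4)) := by
      intro θ hθ
      simp only [hW]
      by_cases hle : θ ≤ π / 4
      · have hθe : θ = π / 4 := le_antisymm hle (Set.mem_Ici.1 hθ)
        rw [if_pos hle, hθe]
        exact hi
      · rw [if_neg hle]
    have hL : derivWithin W (Set.Iic (π / 4)) (π / 4) = C * (Real.cos (lam * (π / 4)) * lam) := by
      rw [derivWithin_congr hWL (hWL Set.self_mem_Iic)]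
      exact hD1.hasDerivWithinAt.derivWithin (uniqueDiffOn_Iic _ _ Set.self_mem_Iic)
    have hR : derivWithin W (Set.Ici (π / 4)) (π / 4)
        = -Real.sin (lam * (π / 4)) * lam + T * (Real.cos (lam * (π / 4)) * lam) := by
      rw [derivWithin_congr hWR (hWR Set.self_mem_Ici)]
      exact hD2.hasDerivWithinAt.derivWithin (uniqueDiffOn_Ici _ _ Set.self_mem_Ici)
    rw [hL, hR]
    have harg : lam * (π / 4) = a := by rw [hadef]; ring
    rw [harg]
    have hTa : T = Real.sin b / Real.cos b := by rw [hT, hlb, Real.tan_eq_sin_div_cos]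
    have hCa : C = Real.cos a / Real.sin a + Real.sin b / Real.cos b := by
      rw [hC, ← hadef, Real.cot_eq_cos_div_sin, ← hTa]
    have h1 : (2 * Real.cos a ^ 2 - 1) ≠ 0 := by rw [← hcos2]; exact hcosbne
    rw [hCa, hTa, hsinb, hcos2]
    field_simp
    have h1' : Real.cos a ^ 2 * 2 - 1 ≠ 0 := by rw [mul_comm]; exact h1
    field_simp
    linear_combination (lam * (2 * Real.cos a ^ 2 - 1 + 2 * Real.sin a ^ 2)) * hkey +
      (2 * p * lam * Real.sin a ^ 2) * hpyth
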